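/- Let f : ℝ^d → ℝ be convex and L-smooth (differentiable with L-Lipschitz gradient, L > 0). Let w_0 ∈ ℝ^d and define gradient-descent iterates w_{τ+1} = w_τ − η ∇f(w_τ) with step size η > 0. Then for every integer τ ≥ 0, ‖∇f(w_{τ+1})‖² ≤ ‖∇f(w_τ)‖² − (2/(ηL) − 1) ‖∇f(w_{τ+1}) − ∇f(w_τ)‖². -/

import Mathlib

open scoped RealInnerProductSpace

section Aux

variable {d : ℕ}

local notation "E" => EuclideanSpace ℝ (Fin d)

/-- derivative of the 1-D restriction -/
lemma aux_hasDerivAt (f : E → ℝ) (hdiff : Differentiable ℝ f) (x v : E) (t : ℝ) :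
    HasDerivAt (fun s : ℝ => f (x + s • v)) ⟪gradient f (x + t • v), v⟫ t := by
  have h1 : HasDerivAt (fun s : ℝ => x + s • v) v t := by
    simpa using ((hasDerivAt_id t).smul_const v).const_add x
  have h2 : HasFDerivAt f ((InnerProductSpace.toDual ℝ _) (gradient f (x + t • v)))
      (x + t • v) :=
    (hasGradientAt_iff_hasFDerivAt.mp (hdiff (x + t • v)).hasGradientAt)
  have h3 := h2.comp_hasDerivAt t h1
  rw [InnerProductSpace.toDual_apply_apply] at h3
  exact h3

/-- first-order convexity inequality -/
lemma aux_convex_lower (f : E → ℝ) (hconv : ConvexOn ℝ Set.univ f)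
    (hdiff : Differentiable ℝ f) (x y : E) :
    f x + ⟪gradient f x, y - x⟫ ≤ f y := by
  set g : ℝ → ℝ := fun s => f (x + s • (y - x)) with hg
  have hgc : ConvexOn ℝ Set.univ g := by
    have := hconv.comp_affineMap (AffineMap.lineMap x y : ℝ →ᵃ[ℝ] E)
    simp only [Set.preimage_univ] at this
    have he : g = f ∘ (AffineMap.lineMap x y : ℝ →ᵃ[ℝ] E) := by
      funext s
      show f (x + s • (y - x)) = f ((AffineMap.lineMap x y : ℝ →ᵃ[ℝ] E) s)
      rw [AffineMap.lineMap_apply_module]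
      exact congrArg f (by module)
    rw [he]
    exact this
  have hd : HasDerivAt g ⟪gradient f x, y - x⟫ 0 := by
    have := aux_hasDerivAt f hdiff x (y - x) 0
    simpa using this
  have := hgc.le_slope_of_hasDerivAt (Set.mem_univ (0:ℝ)) (Set.mem_univ (1:ℝ))
    zero_lt_one hd
  have hslope : slope g 0 1 = f y - f x := by
    simp [slope_def_field, g]
  rw [hslope] at this
  linarith

/-- descent lemma -/
lemma aux_descent (f : E → ℝ) (L : ℝ) (hL : 0 < L)
    (hdiff : Differentiable ℝ f)
    (hlip : ∀ x y, ‖gradient f x - gradient f y‖ ≤ L * ‖x - y‖) (x y : E) :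
    f y ≤ f x + ⟪gradient f x, y - x⟫ + L / 2 * ‖y - x‖ ^ 2 := by
  set v : E := y - x with hv
  set h : ℝ → ℝ := fun t => f (x + t • v) - t * ⟪gradient f x, v⟫ - L * t ^ 2 / 2 * ‖v‖ ^ 2
    with hh
  have hd : ∀ t : ℝ, HasDerivAt h
      (⟪gradient f (x + t • v), v⟫ - ⟪gradient f x, v⟫ - L * t * ‖v‖ ^ 2) t := by
    intro t
    have h1 := aux_hasDerivAt f hdiff x v t
    have h2 : HasDerivAt (fun t : ℝ => t * ⟪gradient f x, v⟫) ⟪gradient f x, v⟫ t := by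
      simpa using (hasDerivAt_id t).mul_const ⟪gradient f x, v⟫
    have h3 : HasDerivAt (fun t : ℝ => L * t ^ 2 / 2 * ‖v‖ ^ 2) (L * t * ‖v‖ ^ 2) t := by
      have : HasDerivAt (fun t : ℝ => t ^ 2) (2 * t) t := by
        simpa using hasDerivAt_pow 2 t
      have := ((this.const_mul L).div_const 2).mul_const (‖v‖ ^ 2)
      rw [show L * t * ‖v‖ ^ 2 = L * (2 * t) / 2 * ‖v‖ ^ 2 by ring]
      exact this
    exact (h1.sub h2).sub h3
  have hanti : AntitoneOn h (Set.Icc (0:ℝ) 1) := by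
    apply antitoneOn_of_deriv_nonpos (convex_Icc 0 1)
    · exact fun t _ => (hd t).continuousAt.continuousWithinAt
    · intro t ht
      exact (hd t).differentiableAt.differentiableWithinAt
    · intro t ht
      rw [interior_Icc] at ht
      rw [(hd t).deriv]
      have key : ⟪gradient f (x + t • v) - gradient f x, v⟫ ≤ L * t * ‖v‖ ^ 2 := by
        calc ⟪gradient f (x + t • v) - gradient f x, v⟫
            ≤ ‖gradient f (x + t • v) - gradient f x‖ * ‖v‖ := real_inner_le_norm _ _
          _ ≤ (L * ‖(x + t • v) - x‖) * ‖v‖ := by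
              apply mul_le_mul_of_nonneg_right (hlip _ _) (norm_nonneg _)
          _ = L * t * ‖v‖ ^ 2 := by
              rw [add_sub_cancel_left, norm_smul]
              simp [abs_of_pos ht.1]
              ring
      rw [inner_sub_left] at key
      linarith
  have h10 : h 1 ≤ h 0 := hanti (by norm_num) (by norm_num) zero_le_one
  simp only [hh, one_smul, zero_smul, add_zero, one_pow, mul_one, one_mul, zero_pow,
    mul_zero, zero_mul, sub_zero] at h10
  have : x + v = y := by simp [hv]
  rw [this] at h10
  linarith

/-- key sufficient-decrease inequality -/
lemma aux_key (f : E → ℝ) (L : ℝ) (hL : 0 < L)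
    (hconv : ConvexOn ℝ Set.univ f) (hdiff : Differentiable ℝ f)
    (hlip : ∀ x y, ‖gradient f x - gradient f y‖ ≤ L * ‖x - y‖) (x y : E) :
    f x + ⟪gradient f x, y - x⟫ + 1 / (2 * L) * ‖gradient f y - gradient f x‖ ^ 2 ≤ f y := by
  set u : E := gradient f y - gradient f x with hu
  set z : E := y - L⁻¹ • u with hz
  have hA := aux_convex_lower f hconv hdiff x z
  have hB := aux_descent f L hL hdiff hlip y z
  have hzy : z - y = -(L⁻¹ • u) := by rw [hz]; abel
  have hzy2 : ‖z - y‖ ^ 2 = L⁻¹ ^ 2 * ‖u‖ ^ 2 := by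
    rw [hzy, norm_neg, norm_smul, Real.norm_eq_abs, abs_inv, abs_of_pos hL]
    ring
  have hzx : z - x = (y - x) + (z - y) := by abel
  have e1 : ⟪gradient f x, z - x⟫
      = ⟪gradient f x, y - x⟫ - L⁻¹ * ⟪gradient f x, u⟫ := by
    rw [hzx, inner_add_right, hzy, inner_neg_right, real_inner_smul_right]
    ring
  have e2 : ⟪gradient f y, z - y⟫ = - (L⁻¹ * ⟪gradient f y, u⟫) := by
    rw [hzy, inner_neg_right, real_inner_smul_right]
  have e3 : ⟪gradient f y, u⟫ - ⟪gradient f x, u⟫ = ‖u‖ ^ 2 := by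
    rw [← inner_sub_left, ← hu, real_inner_self_eq_norm_sq]
  have hL' : L⁻¹ > 0 := inv_pos.mpr hL
  have combo : f x + ⟪gradient f x, z - x⟫ ≤
      f y + ⟪gradient f y, z - y⟫ + L / 2 * ‖z - y‖ ^ 2 := le_trans hA hB
  rw [e1, e2, hzy2] at combo
  have hfield : L / 2 * (L⁻¹ ^ 2 * ‖u‖ ^ 2) = 1 / (2 * L) * ‖u‖ ^ 2 := by
    field_simp <;> ring
  rw [hfield] at combo
  have : L⁻¹ * ⟪gradient f y, u⟫ - L⁻¹ * ⟪gradient f x, u⟫ = L⁻¹ * ‖u‖ ^ 2 := by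
    rw [← mul_sub, e3]
  have hinvL : L⁻¹ * ‖u‖ ^ 2 - 1 / (2 * L) * ‖u‖ ^ 2 = 1 / (2 * L) * ‖u‖ ^ 2 := by
    field_simp <;> ring
  nlinarith [combo]

/-- co-coercivity -/
lemma aux_cocoercive (f : E → ℝ) (L : ℝ) (hL : 0 < L)
    (hconv : ConvexOn ℝ Set.univ f) (hdiff : Differentiable ℝ f)
    (hlip : ∀ x y, ‖gradient f x - gradient f y‖ ≤ L * ‖x - y‖) (x y : E) :
    1 / L * ‖gradient f x - gradient f y‖ ^ 2 ≤ ⟪gradient f x - gradient f y, x - y⟫ := by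
  have h1 := aux_key f L hL hconv hdiff hlip x y
  have h2 := aux_key f L hL hconv hdiff hlip y x
  have hsymm : ‖gradient f x - gradient f y‖ = ‖gradient f y - gradient f x‖ :=
    norm_sub_rev _ _
  have e1 : ⟪gradient f x - gradient f y, x - y⟫
      = ⟪gradient f x, x - y⟫ - ⟪gradient f y, x - y⟫ := inner_sub_left _ _ _
  have e2 : ⟪gradient f x, y - x⟫ = - ⟪gradient f x, x - y⟫ := by
    rw [← inner_neg_right]; congr 1; abel
  rw [hsymm] at h2
  rw [hsymm, e1]
  rw [e2] at h1
  have hc : 1 / L * ‖gradient f y - gradient f x‖ ^ 2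
      = 2 * (1 / (2 * L) * ‖gradient f y - gradient f x‖ ^ 2) := by
    field_simp <;> ring
  linarith [h1, h2, hc]

end Aux

/-- Lemma F.3: per-step gradient-norm decrease for gradient descent on a convex,
`L`-smooth function. -/
theorem stmt_3 {d : ℕ} (f : EuclideanSpace ℝ (Fin d) → ℝ) (L : ℝ) (hL : 0 < L)
    (hconv : ConvexOn ℝ Set.univ f)
    (hdiff : Differentiable ℝ f)
    (hlip : ∀ x y, ‖gradient f x - gradient f y‖ ≤ L * ‖x - y‖)
    (η : ℝ) (hη0 : 0 < η)
    (w : ℕ → EuclideanSpace ℝ (Fin d))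
    (hw : ∀ τ, w (τ + 1) = w τ - η • gradient f (w τ)) :
    ∀ τ : ℕ,
      ‖gradient f (w (τ + 1))‖ ^ 2 ≤
        ‖gradient f (w τ)‖ ^ 2
          - (2 / (η * L) - 1) * ‖gradient f (w (τ + 1)) - gradient f (w τ)‖ ^ 2 := by
  intro τ
  set g : EuclideanSpace ℝ (Fin d) := gradient f (w τ) with hg
  set g' : EuclideanSpace ℝ (Fin d) := gradient f (w (τ + 1)) with hg'
  have hco := aux_cocoercive f L hL hconv hdiff hlip (w (τ + 1)) (w τ)
  have hdiffpt : w (τ + 1) - w τ = -(η • g) := by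
    rw [hw τ]; abel
  rw [hdiffpt] at hco
  have hinner : ⟪g' - g, -(η • g)⟫ = -η * ⟪g' - g, g⟫ := by
    rw [inner_neg_right, real_inner_smul_right]; ring
  rw [hinner] at hco
  -- so ⟪g' - g, g⟫ ≤ -(1/(η L)) ‖g' - g‖²
  have hηL : 0 < η * L := mul_pos hη0 hL
  have hkey : ⟪g' - g, g⟫ ≤ -(1 / (η * L)) * ‖g' - g‖ ^ 2 := by
    have h' : η * ⟪g' - g, g⟫ ≤ -(1 / L) * ‖g' - g‖ ^ 2 := by linarith
    rw [← mul_le_mul_iff_right₀ hη0]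
    have hid : η * (1 / (η * L)) = 1 / L := by field_simp
    have hid2 : η * (-(1 / (η * L)) * ‖g' - g‖ ^ 2)
        = -(1 / L) * ‖g' - g‖ ^ 2 := by
      rw [show η * (-(1 / (η * L)) * ‖g' - g‖ ^ 2)
          = -(η * (1 / (η * L))) * ‖g' - g‖ ^ 2 by ring, hid]
    rw [hid2]
    exact h'
  have hexp : ‖g'‖ ^ 2 = ‖g‖ ^ 2 + 2 * ⟪g' - g, g⟫ + ‖g' - g‖ ^ 2 := by
    have h := norm_add_sq_real g (g' - g)
    have e : g + (g' - g) = g' := by abel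
    rw [e] at h
    rw [h, real_inner_comm]
  have h2 : 2 / (η * L) = 2 * (1 / (η * L)) := by ring
  rw [hexp, h2]
  nlinarith [hkey, sq_nonneg ‖g' - g‖]
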